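/- Let Γ be a finite simple graph each of whose edges is colored red, green, or blue, with R red edges, G green edges, and B blue edges, and suppose the number of rainbow triangles of Γ equals √(2·R·G·B) and is positive. Then every edge of Γ belongs to at least one rainbow triangle. -/

import Mathlib

open scoped Classical

noncomputable section

namespace RainbowTri

variable {V : Type*} [Fintype V]

/-- The finset of edges of `Γ` having color `c` (red = 0, green = 1, blue = 2). -/
def colorEdges (Γ : SimpleGraph V) (col : Sym2 V → Fin 3) (c : Fin 3) : Finset (Sym2 V) :=
  Finset.univ.filter (fun e => e ∈ Γ.edgeSet ∧ col e = c)

/-- The finset of rainbow triangles: 3-sets of pairwise adjacent vertices whose three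
edges receive three distinct colors. -/
def rainbowTriangles (Γ : SimpleGraph V) (col : Sym2 V → Fin 3) : Finset (Finset V) :=
  Finset.univ.filter (fun s => ∃ a b c : V, s = {a, b, c} ∧
    Γ.Adj a b ∧ Γ.Adj a c ∧ Γ.Adj b c ∧
    col s(a, b) ≠ col s(a, c) ∧ col s(a, b) ≠ col s(b, c) ∧ col s(a, c) ≠ col s(b, c))

/-- The finset of properly 3-edge-colored copies of `K₄`: 4-sets of pairwise adjacent
vertices on which each color appears on exactly two (disjoint) of the six edges. -/
def properK4s (Γ : SimpleGraph V) (col : Sym2 V → Fin 3) : Finset (Finset V) :=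
  Finset.univ.filter (fun s => ∃ a b c d : V, s = {a, b, c, d} ∧
    Γ.Adj a b ∧ Γ.Adj a c ∧ Γ.Adj a d ∧ Γ.Adj b c ∧ Γ.Adj b d ∧ Γ.Adj c d ∧
    col s(a, b) = col s(c, d) ∧ col s(a, c) = col s(b, d) ∧ col s(a, d) = col s(b, c) ∧
    col s(a, b) ≠ col s(a, c) ∧ col s(a, b) ≠ col s(a, d) ∧ col s(a, c) ≠ col s(a, d))

/-- The color pattern of a proper 3-edge-coloring of `K₄` on vertex set `Fin 4`:
opposite edges get the same color ({0,1},{2,3} ↦ 0; {0,2},{1,3} ↦ 1; {0,3},{1,2} ↦ 2). -/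
def pairColor (i j : Fin 4) : Fin 3 :=
  ⟨((i.val ^^^ j.val) - 1) % 3, Nat.mod_lt _ (by norm_num)⟩

/-- `Γ` (with edge coloring `col`) is obtained from a blowup of a properly
3-edge-colored `K₄` by possibly adding a set of isolated vertices: vertices mapped to
`none` are isolated, vertices are adjacent iff they lie in distinct parts, and colors
between parts follow the proper `K₄`-pattern up to a permutation `σ` of the colors. -/
def IsBlowupK4PlusIsolated (Γ : SimpleGraph V) (col : Sym2 V → Fin 3) : Prop :=
  ∃ (P : V → Option (Fin 4)) (σ : Equiv.Perm (Fin 3)),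
    (∀ u v : V, Γ.Adj u v ↔ ∃ i j : Fin 4, i ≠ j ∧ P u = some i ∧ P v = some j) ∧
    (∀ (u v : V) (i j : Fin 4), P u = some i → P v = some j → Γ.Adj u v →
      col s(u, v) = σ (pairColor i j))

/-- As `IsBlowupK4PlusIsolated`, where moreover the four parts have equal size. -/
def IsBalancedBlowupK4PlusIsolated (Γ : SimpleGraph V) (col : Sym2 V → Fin 3) : Prop :=
  ∃ (P : V → Option (Fin 4)) (σ : Equiv.Perm (Fin 3)),
    (∀ u v : V, Γ.Adj u v ↔ ∃ i j : Fin 4, i ≠ j ∧ P u = some i ∧ P v = some j) ∧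
    (∀ (u v : V) (i j : Fin 4), P u = some i → P v = some j → Γ.Adj u v →
      col s(u, v) = σ (pairColor i j)) ∧
    (∀ i j : Fin 4, (Finset.univ.filter (fun v => P v = some i)).card
      = (Finset.univ.filter (fun v => P v = some j)).card)

/-- `Γ` (with edge coloring `col`) is a balanced blowup of a properly 3-edge-colored
`K₄` (no extra isolated vertices). -/
def IsBalancedBlowupK4 (Γ : SimpleGraph V) (col : Sym2 V → Fin 3) : Prop :=
  ∃ (P : V → Fin 4) (σ : Equiv.Perm (Fin 3)),
    (∀ u v : V, Γ.Adj u v ↔ P u ≠ P v) ∧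
    (∀ u v : V, Γ.Adj u v → col s(u, v) = σ (pairColor (P u) (P v))) ∧
    (∀ i j : Fin 4, (Finset.univ.filter (fun v => P v = i)).card
      = (Finset.univ.filter (fun v => P v = j)).card)

/-- `d⁺(u,v)`: the number of vertices `w` with `uw` blue and `vw` green. -/
def dPlus (Γ : SimpleGraph V) (col : Sym2 V → Fin 3) (u v : V) : ℕ :=
  (Finset.univ.filter (fun w => Γ.Adj u w ∧ col s(u, w) = 2 ∧
    Γ.Adj v w ∧ col s(v, w) = 1)).card

/-- `d⁻(u,v)`: the number of vertices `w` with `uw` green and `vw` blue. -/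
def dMinus (Γ : SimpleGraph V) (col : Sym2 V → Fin 3) (u v : V) : ℕ :=
  (Finset.univ.filter (fun w => Γ.Adj u w ∧ col s(u, w) = 1 ∧
    Γ.Adj v w ∧ col s(v, w) = 2)).card

/-- `d_K(u,v)`: the number of ordered pairs `(w,x)` with `wx` red, `uw`, `vx` green
and `ux`, `vw` blue. -/
def dK (Γ : SimpleGraph V) (col : Sym2 V → Fin 3) (u v : V) : ℕ :=
  (Finset.univ.filter (fun p : V × V => Γ.Adj p.1 p.2 ∧ col s(p.1, p.2) = 0 ∧
    Γ.Adj u p.1 ∧ col s(u, p.1) = 1 ∧ Γ.Adj v p.2 ∧ col s(v, p.2) = 1 ∧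
    Γ.Adj u p.2 ∧ col s(u, p.2) = 2 ∧ Γ.Adj v p.1 ∧ col s(v, p.1) = 2)).card

/-- Ordered pairs of vertices inducing a red edge. -/
def redPairs (Γ : SimpleGraph V) (col : Sym2 V → Fin 3) : Finset (V × V) :=
  Finset.univ.filter (fun p => Γ.Adj p.1 p.2 ∧ col s(p.1, p.2) = 0)

/-- The set `S` of ordered tuples `(u,v,x,y)` with `uv` red, `ux`, `uy` blue and
`vx`, `vy` green (`x = y` allowed). -/
def tupleSet (Γ : SimpleGraph V) (col : Sym2 V → Fin 3) : Finset (V × V × V × V) :=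
  Finset.univ.filter (fun t => Γ.Adj t.1 t.2.1 ∧ col s(t.1, t.2.1) = 0 ∧
    Γ.Adj t.1 t.2.2.1 ∧ col s(t.1, t.2.2.1) = 2 ∧
    Γ.Adj t.1 t.2.2.2 ∧ col s(t.1, t.2.2.2) = 2 ∧
    Γ.Adj t.2.1 t.2.2.1 ∧ col s(t.2.1, t.2.2.1) = 1 ∧
    Γ.Adj t.2.1 t.2.2.2 ∧ col s(t.2.1, t.2.2.2) = 1)


/-! ### Auxiliary development for `stmt12` -/

/-- Triples `(u,v,w)` with `uv` red, `uw` blue, `vw` green. -/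
def redTriples (Γ : SimpleGraph V) (col : Sym2 V → Fin 3) : Finset (V × V × V) :=
  Finset.univ.filter (fun t => Γ.Adj t.1 t.2.1 ∧ col s(t.1, t.2.1) = 0 ∧
    Γ.Adj t.1 t.2.2 ∧ col s(t.1, t.2.2) = 2 ∧
    Γ.Adj t.2.1 t.2.2 ∧ col s(t.2.1, t.2.2) = 1)

lemma T_le_redTriples (Γ : SimpleGraph V) (col : Sym2 V → Fin 3) :
    (rainbowTriangles Γ col).card ≤ (redTriples Γ col).card := by
  apply Finset.card_le_card_of_surjOn (fun t : V × V × V => ({t.1, t.2.1, t.2.2} : Finset V))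
  intro s hs
  simp only [Finset.coe_filter, Set.mem_setOf_eq, rainbowTriangles, Finset.mem_filter,
    Finset.mem_univ, true_and] at hs
  obtain ⟨a, b, c, rfl, hab, hac, hbc, d1, d2, d3⟩ := hs
  have hcases : ∀ x y z : Fin 3, x ≠ y → x ≠ z → y ≠ z →
      (x = 0 ∧ y = 2 ∧ z = 1) ∨ (x = 0 ∧ y = 1 ∧ z = 2) ∨ (x = 2 ∧ y = 0 ∧ z = 1) ∨
      (x = 1 ∧ y = 0 ∧ z = 2) ∨ (x = 2 ∧ y = 1 ∧ z = 0) ∨ (x = 1 ∧ y = 2 ∧ z = 0) := by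
    decide
  have hperm : ∀ u v w : V, ({u, v, w} : Finset V) = {a, b, c} →
      Γ.Adj u v → col s(u, v) = 0 → Γ.Adj u w → col s(u, w) = 2 →
      Γ.Adj v w → col s(v, w) = 1 →
      ∃ t ∈ (redTriples Γ col : Set (V × V × V)),
        ({t.1, t.2.1, t.2.2} : Finset V) = {a, b, c} := by
    intro u v w hset h1 h2 h3 h4 h5 h6
    exact ⟨(u, v, w), by simp [redTriples, h1, h2, h3, h4, h5, h6], hset⟩
  have sab : s(a, b) = s(b, a) := Sym2.eq_swap
  have sac : s(a, c) = s(c, a) := Sym2.eq_swap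
  have sbc : s(b, c) = s(c, b) := Sym2.eq_swap
  have habc : ({a, b, c} : Finset V) = {a, b, c} := rfl
  rcases hcases _ _ _ d1 d2 d3 with ⟨h1, h2, h3⟩ | ⟨h1, h2, h3⟩ | ⟨h1, h2, h3⟩ |
    ⟨h1, h2, h3⟩ | ⟨h1, h2, h3⟩ | ⟨h1, h2, h3⟩
  · exact hperm a b c (by ext x; simp; try tauto) hab h1 hac h2 hbc h3
  · exact hperm b a c (by ext x; simp; try tauto) hab.symm (sab ▸ h1) hbc h3 hac h2
  · exact hperm a c b (by ext x; simp; try tauto) hac h2 hab h1 hbc.symm (sbc ▸ h3)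
  · exact hperm c a b (by ext x; simp; try tauto) hac.symm (sac ▸ h2) hbc.symm (sbc ▸ h3) hab h1
  · exact hperm b c a (by ext x; simp; try tauto) hbc h3 hab.symm (sab ▸ h1) hac.symm (sac ▸ h2)
  · exact hperm c b a (by ext x; simp; try tauto) hbc.symm (sbc ▸ h3) hac.symm (sac ▸ h2) hab.symm (sab ▸ h1)

lemma redTriples_card (Γ : SimpleGraph V) (col : Sym2 V → Fin 3) :
    (redTriples Γ col).card = ∑ p ∈ redPairs Γ col, dPlus Γ col p.1 p.2 := by
  classical
  rw [Finset.card_eq_sum_card_fiberwise (f := fun t : V × V × V => (t.1, t.2.1))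
    (t := redPairs Γ col) (by intro t ht; simp [redTriples] at ht; simp [redPairs]; tauto)]
  refine Finset.sum_congr rfl fun p hp => ?_
  simp only [redPairs, Finset.mem_filter, Finset.mem_univ, true_and] at hp
  have himg : (redTriples Γ col).filter (fun t => (t.1, t.2.1) = p)
      = (Finset.univ.filter (fun w => Γ.Adj p.1 w ∧ col s(p.1, w) = 2 ∧
          Γ.Adj p.2 w ∧ col s(p.2, w) = 1)).image (fun w => (p.1, p.2, w)) := by
    ext ⟨t1, t2, t3⟩
    simp only [redTriples, Finset.mem_filter, Finset.mem_univ, true_and, Finset.mem_image,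
      Prod.ext_iff]
    constructor
    · rintro ⟨⟨r1, r2, r3, r4, r5, r6⟩, e1, e2⟩
      subst e1; subst e2
      exact ⟨t3, ⟨r3, r4, r5, r6⟩, rfl, rfl, rfl⟩
    · rintro ⟨w, ⟨hw1, hw2, hw3, hw4⟩, e1, e2, e3⟩
      subst e3; subst e1; subst e2
      exact ⟨⟨hp.1, hp.2, hw1, hw2, hw3, hw4⟩, rfl, rfl⟩
  rw [himg, Finset.card_image_of_injective _ (by intro x y h; simpa using h)]
  rfl


lemma redPairs_card (Γ : SimpleGraph V) (col : Sym2 V → Fin 3) :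
    (redPairs Γ col).card = 2 * (colorEdges Γ col 0).card := by
  classical
  rw [Finset.card_eq_sum_card_fiberwise (f := fun p : V × V => s(p.1, p.2))
    (t := colorEdges Γ col 0) (by
      intro p hp; simp [redPairs] at hp; simp [colorEdges]
      exact ⟨hp.1, hp.2⟩)]
  rw [Finset.sum_congr rfl (fun e he => ?_), Finset.sum_const, smul_eq_mul, mul_comm]
  simp only [colorEdges, Finset.mem_filter, Finset.mem_univ, true_and] at he
  obtain ⟨he1, he2⟩ := he
  induction e using Sym2.ind with
  | _ a b =>
    have hadj : Γ.Adj a b := he1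
    have hne : a ≠ b := hadj.ne
    have : (redPairs Γ col).filter (fun p => s(p.1, p.2) = s(a, b))
        = {(a, b), (b, a)} := by
      ext p
      simp only [redPairs, Finset.mem_filter, Finset.mem_univ, true_and,
        Finset.mem_insert, Finset.mem_singleton, Prod.ext_iff]
      constructor
      · rintro ⟨⟨_, _⟩, hs⟩
        rcases Sym2.eq_iff.mp hs with ⟨h1, h2⟩ | ⟨h1, h2⟩
        · exact Or.inl ⟨h1, h2⟩
        · exact Or.inr ⟨h1, h2⟩
      · rintro (⟨h1, h2⟩ | ⟨h1, h2⟩)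
        · obtain ⟨p1, p2⟩ := p
          simp only at h1 h2; subst h1; subst h2
          exact ⟨⟨hadj, he2⟩, rfl⟩
        · obtain ⟨p1, p2⟩ := p
          simp only at h1 h2; subst h1; subst h2
          exact ⟨⟨hadj.symm, Sym2.eq_swap ▸ he2⟩, Sym2.eq_swap⟩
    rw [this]
    rw [Finset.card_insert_of_notMem (by simp [Prod.ext_iff]; exact fun h => absurd h hne),
      Finset.card_singleton]

lemma sum_dPlus_sq (Γ : SimpleGraph V) (col : Sym2 V → Fin 3) :
    ∑ p ∈ redPairs Γ col, (dPlus Γ col p.1 p.2) ^ 2 = (tupleSet Γ col).card := by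
  classical
  rw [Finset.card_eq_sum_card_fiberwise (f := fun t : V × V × V × V => (t.1, t.2.1))
    (t := redPairs Γ col) (by intro t ht; simp [tupleSet] at ht; simp [redPairs]; tauto)]
  refine Finset.sum_congr rfl fun p hp => ?_
  simp only [redPairs, Finset.mem_filter, Finset.mem_univ, true_and] at hp
  set D : Finset V := Finset.univ.filter (fun w => Γ.Adj p.1 w ∧ col s(p.1, w) = 2 ∧
    Γ.Adj p.2 w ∧ col s(p.2, w) = 1) with hD
  have himg : (tupleSet Γ col).filter (fun t => (t.1, t.2.1) = p)
      = (D ×ˢ D).image (fun q : V × V => (p.1, p.2, q.1, q.2)) := by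
    ext ⟨t1, t2, t3, t4⟩
    simp only [tupleSet, Finset.mem_filter, Finset.mem_univ, true_and, Finset.mem_image,
      Finset.mem_product, hD, Prod.ext_iff]
    constructor
    · rintro ⟨⟨r1, r2, r3, r4, r5, r6, r7, r8, r9, r10⟩, e1, e2⟩
      subst e1; subst e2
      refine ⟨(t3, t4), ⟨?_, ?_⟩, rfl, rfl, rfl, rfl⟩
      · simp only [Finset.mem_filter, Finset.mem_univ, true_and]; exact ⟨r3, r4, r7, r8⟩
      · simp only [Finset.mem_filter, Finset.mem_univ, true_and]; exact ⟨r5, r6, r9, r10⟩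
    · rintro ⟨⟨x, y⟩, ⟨hx, hy⟩, e1, e2, e3, e4⟩
      simp only [Finset.mem_filter, Finset.mem_univ, true_and] at hx hy
      subst e1; subst e2; subst e3; subst e4
      exact ⟨⟨hp.1, hp.2, hx.1, hx.2.1, hy.1, hy.2.1, hx.2.2.1, hx.2.2.2, hy.2.2.1, hy.2.2.2⟩,
        rfl, rfl⟩
  rw [dPlus, himg, Finset.card_image_of_injective _ (by intro x y h; simpa [Prod.ext_iff] using h),
    Finset.card_product, sq]

lemma tupleSet_card_le (Γ : SimpleGraph V) (col : Sym2 V → Fin 3) :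
    (tupleSet Γ col).card ≤ (colorEdges Γ col 2).card * (colorEdges Γ col 1).card := by
  classical
  rw [← Finset.card_product]
  apply Finset.card_le_card_of_injOn
    (fun t : V × V × V × V => (s(t.1, t.2.2.2), s(t.2.1, t.2.2.1)))
  · intro t ht
    simp only [Finset.mem_coe, tupleSet, Finset.mem_filter, Finset.mem_univ, true_and] at ht
    obtain ⟨r1, r2, r3, r4, r5, r6, r7, r8, r9, r10⟩ := ht
    simp only [Finset.mem_coe, Finset.mem_product, colorEdges, Finset.mem_filter, Finset.mem_univ, true_and]
    exact ⟨⟨r5, r6⟩, ⟨r7, r8⟩⟩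
  · rintro ⟨u, v, x, y⟩ ht ⟨u', v', x', y'⟩ ht' h
    simp only [tupleSet, Finset.coe_filter, Set.mem_setOf_eq, Finset.mem_filter,
      Finset.mem_univ, true_and] at ht ht'
    obtain ⟨r1, r2, r3, r4, r5, r6, r7, r8, r9, r10⟩ := ht
    obtain ⟨q1, q2, q3, q4, q5, q6, q7, q8, q9, q10⟩ := ht'
    simp only [Prod.mk.injEq] at h
    obtain ⟨h1, h2⟩ := h
    rcases Sym2.eq_iff.mp h1 with ⟨e1, e2⟩ | ⟨e1, e2⟩ <;>
      rcases Sym2.eq_iff.mp h2 with ⟨f1, f2⟩ | ⟨f1, f2⟩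
    · simp [e1, e2, f1, f2]
    · exfalso
      subst e1; subst e2; subst f1; subst f2
      exact absurd (q2.symm.trans r4) (by decide)
    · exfalso
      subst e1; subst e2; subst f1; subst f2
      have hsw : s(y, v) = s(v, y) := Sym2.eq_swap
      rw [hsw] at q2
      exact absurd (q2.symm.trans r10) (by decide)
    · exfalso
      subst e1; subst e2; subst f1; subst f2
      have hsw : s(y, v) = s(v, y) := Sym2.eq_swap
      rw [hsw] at q4
      exact absurd (q4.symm.trans r10) (by decide)

lemma key_ineq (Γ : SimpleGraph V) (col : Sym2 V → Fin 3) :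
    (rainbowTriangles Γ col).card ^ 2 ≤
      2 * (colorEdges Γ col 0).card * (colorEdges Γ col 1).card * (colorEdges Γ col 2).card := by
  classical
  have h1 := T_le_redTriples Γ col
  have h2 := redTriples_card Γ col
  have h3 := redPairs_card Γ col
  have h4 := sum_dPlus_sq Γ col
  have h5 := tupleSet_card_le Γ col
  have cs : ((redTriples Γ col).card) ^ 2 ≤
      (redPairs Γ col).card * (tupleSet Γ col).card := by
    have := sq_sum_le_card_mul_sum_sq (s := redPairs Γ col)
      (f := fun p => (dPlus Γ col p.1 p.2 : ℝ))
    rw [h2, ← h4]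
    exact_mod_cast (by push_cast at this ⊢; exact this :
      (((∑ p ∈ redPairs Γ col, dPlus Γ col p.1 p.2 : ℕ)) : ℝ) ^ 2 ≤
        ((redPairs Γ col).card : ℝ) * ((∑ p ∈ redPairs Γ col, (dPlus Γ col p.1 p.2) ^ 2 : ℕ) : ℝ))
  calc (rainbowTriangles Γ col).card ^ 2 ≤ ((redTriples Γ col).card) ^ 2 := by
        exact Nat.pow_le_pow_left h1 2
    _ ≤ (redPairs Γ col).card * (tupleSet Γ col).card := cs
    _ ≤ (2 * (colorEdges Γ col 0).card) *
        ((colorEdges Γ col 2).card * (colorEdges Γ col 1).card) := by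
        rw [h3]; exact Nat.mul_le_mul_left _ h5
    _ = 2 * (colorEdges Γ col 0).card * (colorEdges Γ col 1).card *
        (colorEdges Γ col 2).card := by ring

/-- If a 3-edge-colored graph has exactly `√(2·R·G·B) > 0` rainbow triangles, then
every edge belongs to at least one rainbow triangle. -/
theorem stmt12 (Γ : SimpleGraph V) (col : Sym2 V → Fin 3) (R G B T : ℕ)
    (hR : R = (colorEdges Γ col 0).card)
    (hG : G = (colorEdges Γ col 1).card)
    (hB : B = (colorEdges Γ col 2).card)
    (hT : T = (rainbowTriangles Γ col).card)
    (heq : (T : ℝ) = Real.sqrt (2 * R * G * B))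
    (hpos : 0 < T) :
    ∀ u v : V, Γ.Adj u v → ∃ w : V, Γ.Adj u w ∧ Γ.Adj v w ∧
      col s(u, v) ≠ col s(u, w) ∧ col s(u, v) ≠ col s(v, w) ∧
      col s(u, w) ≠ col s(v, w) := by
  intro u v huv
  by_contra hcon
  push_neg at hcon
  set Γ' := Γ.deleteEdges {s(u, v)} with hG'def
  have hedge : ∀ a b c : V, Γ.Adj a b → Γ.Adj a c → Γ.Adj b c →
      col s(a, b) ≠ col s(a, c) → col s(a, b) ≠ col s(b, c) →
      col s(a, c) ≠ col s(b, c) → s(a, b) ≠ s(u, v) := by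
    intro a b c hab hac hbc d1 d2 d3 h
    rcases Sym2.eq_iff.mp h with ⟨rfl, rfl⟩ | ⟨rfl, rfl⟩
    · exact d3 (hcon c hac hbc d1 d2)
    · have sba : s(b, a) = s(a, b) := Sym2.eq_swap
      exact d3 (hcon c hbc hac (sba ▸ d2) (sba ▸ d1)).symm
  have hsub : rainbowTriangles Γ col ⊆ rainbowTriangles Γ' col := by
    intro s hs
    simp only [rainbowTriangles, Finset.mem_filter, Finset.mem_univ, true_and] at hs ⊢
    obtain ⟨a, b, c, rfl, hab, hac, hbc, d1, d2, d3⟩ := hs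
    have sab : s(a, b) = s(b, a) := Sym2.eq_swap
    have sac : s(a, c) = s(c, a) := Sym2.eq_swap
    have sbc : s(b, c) = s(c, b) := Sym2.eq_swap
    have e1 : s(a, b) ≠ s(u, v) := hedge a b c hab hac hbc d1 d2 d3
    have e2 : s(a, c) ≠ s(u, v) :=
      hedge a c b hac hab hbc.symm d1.symm (sbc ▸ d3) (sbc ▸ d2)
    have e3 : s(b, c) ≠ s(u, v) :=
      hedge b c a hbc hab.symm hac.symm (sab ▸ d2.symm) (sac ▸ d3.symm) (sab ▸ sac ▸ d1)
    exact ⟨a, b, c, rfl,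
      SimpleGraph.deleteEdges_adj.mpr ⟨hab, by simpa using e1⟩,
      SimpleGraph.deleteEdges_adj.mpr ⟨hac, by simpa using e2⟩,
      SimpleGraph.deleteEdges_adj.mpr ⟨hbc, by simpa using e3⟩, d1, d2, d3⟩
  have hcolor : ∀ c : Fin 3, c ≠ col s(u, v) →
      colorEdges Γ' col c = colorEdges Γ col c := by
    intro c hc
    ext e
    simp only [colorEdges, Finset.mem_filter, Finset.mem_univ, true_and, hG'def,
      SimpleGraph.edgeSet_deleteEdges, Set.mem_diff, Set.mem_singleton_iff]
    constructor
    · rintro ⟨⟨h1, _⟩, h2⟩; exact ⟨h1, h2⟩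
    · rintro ⟨h1, h2⟩
      exact ⟨⟨h1, fun he => hc (by rw [← he]; exact h2.symm)⟩, h2⟩
  have hcol0 : colorEdges Γ' col (col s(u, v))
      = (colorEdges Γ col (col s(u, v))).erase (s(u, v)) := by
    ext e
    simp only [colorEdges, Finset.mem_filter, Finset.mem_univ, true_and, Finset.mem_erase,
      hG'def, SimpleGraph.edgeSet_deleteEdges, Set.mem_diff, Set.mem_singleton_iff]
    tauto
  have hmem : s(u, v) ∈ colorEdges Γ col (col s(u, v)) := by
    simp only [colorEdges, Finset.mem_filter, Finset.mem_univ, true_and]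
    exact ⟨huv, by trivial⟩
  have hc0card : (colorEdges Γ' col (col s(u, v))).card + 1
      = (colorEdges Γ col (col s(u, v))).card := by
    rw [hcol0]; exact Finset.card_erase_add_one hmem
  have hkey := key_ineq Γ' col
  have hTle : T ≤ (rainbowTriangles Γ' col).card := hT ▸ Finset.card_le_card hsub
  have hsq : T ^ 2 = 2 * R * G * B := by
    have h0 : (0 : ℝ) ≤ 2 * R * G * B := by positivity
    have h1 : (T : ℝ) ^ 2 = 2 * R * G * B := by rw [heq, Real.sq_sqrt h0]
    exact_mod_cast h1
  have hprod : 0 < 2 * R * G * B := hsq ▸ pow_pos hpos 2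
  have hRpos : 0 < R := Nat.pos_of_ne_zero fun h => by simp [h] at hprod
  have hGpos : 0 < G := Nat.pos_of_ne_zero fun h => by simp [h] at hprod
  have hBpos : 0 < B := Nat.pos_of_ne_zero fun h => by simp [h] at hprod
  have hTT : T ^ 2 ≤ 2 * (colorEdges Γ' col 0).card * (colorEdges Γ' col 1).card
      * (colorEdges Γ' col 2).card :=
    le_trans (Nat.pow_le_pow_left hTle 2) hkey
  have hall : ∀ x : Fin 3, x = 0 ∨ x = 1 ∨ x = 2 := by decide
  rcases hall (col s(u, v)) with hc | hc | hc
  · rw [hc] at hc0card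
    have hG1 : (colorEdges Γ' col 1).card = G := by
      rw [hcolor 1 (by rw [hc]; decide), hG]
    have hB1 : (colorEdges Γ' col 2).card = B := by
      rw [hcolor 2 (by rw [hc]; decide), hB]
    rw [hG1, hB1] at hTT
    have hR1 : (colorEdges Γ' col 0).card + 1 = R := by rw [hR]; exact hc0card
    have hexp : T ^ 2 = 2 * (colorEdges Γ' col 0).card * G * B + 2 * (G * B) := by
      rw [hsq, ← hR1]; ring
    have hfin : 2 * (colorEdges Γ' col 0).card * G * B + 2 * (G * B)
        ≤ 2 * (colorEdges Γ' col 0).card * G * B := hexp ▸ hTT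
    exact absurd hfin (not_le.mpr (Nat.lt_add_of_pos_right
      (Nat.mul_pos (by norm_num) (Nat.mul_pos hGpos hBpos))))
  · rw [hc] at hc0card
    have hR1 : (colorEdges Γ' col 0).card = R := by
      rw [hcolor 0 (by rw [hc]; decide), hR]
    have hB1 : (colorEdges Γ' col 2).card = B := by
      rw [hcolor 2 (by rw [hc]; decide), hB]
    rw [hR1, hB1] at hTT
    have hG1 : (colorEdges Γ' col 1).card + 1 = G := by rw [hG]; exact hc0card
    have hexp : T ^ 2 = 2 * R * (colorEdges Γ' col 1).card * B + 2 * (R * B) := by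
      rw [hsq, ← hG1]; ring
    have hfin : 2 * R * (colorEdges Γ' col 1).card * B + 2 * (R * B)
        ≤ 2 * R * (colorEdges Γ' col 1).card * B := hexp ▸ hTT
    exact absurd hfin (not_le.mpr (Nat.lt_add_of_pos_right
      (Nat.mul_pos (by norm_num) (Nat.mul_pos hRpos hBpos))))
  · rw [hc] at hc0card
    have hR1 : (colorEdges Γ' col 0).card = R := by
      rw [hcolor 0 (by rw [hc]; decide), hR]
    have hG1 : (colorEdges Γ' col 1).card = G := by
      rw [hcolor 1 (by rw [hc]; decide), hG]
    rw [hR1, hG1] at hTT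
    have hB1 : (colorEdges Γ' col 2).card + 1 = B := by rw [hB]; exact hc0card
    have hexp : T ^ 2 = 2 * R * G * (colorEdges Γ' col 2).card + 2 * (R * G) := by
      rw [hsq, ← hB1]; ring
    have hfin : 2 * R * G * (colorEdges Γ' col 2).card + 2 * (R * G)
        ≤ 2 * R * G * (colorEdges Γ' col 2).card := hexp ▸ hTT
    exact absurd hfin (not_le.mpr (Nat.lt_add_of_pos_right
      (Nat.mul_pos (by norm_num) (Nat.mul_pos hRpos hGpos))))

end RainbowTri
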